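/- arXiv:1010.4472 — 7 statements merged into one kernel-verified Lean document; each statement's English description precedes it below -/
import Mathlib

section
/- Let f_{n,p}(x) = n(n+1)(2n-p+1)x⁴ - 4(n+1)(n²+2np+n-p²+p)x³ + 2(n³+9n²p+7n²+4np²+16np+8n-2p³+2p²+6p+2)x² - 8(n+1)(p+1)(n+3p+1)x + 8(p+1)²(n+p+1). Then for integers n ≥ 3 and n/2 ≤ p ≤ n-1, the second derivative f_{n,p}'' is positive for all real x. -/
set_option maxHeartbeats 1000000

lemma hasDerivAt_poly4 (a b c d e x : ℝ) :
    HasDerivAt (fun x => a*x^4 + b*x^3 + c*x^2 + d*x + e)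
      (4*a*x^3 + 3*b*x^2 + 2*c*x + d) x := by
  have h4 := (hasDerivAt_pow 4 x).const_mul a
  have h3 := (hasDerivAt_pow 3 x).const_mul b
  have h2 := (hasDerivAt_pow 2 x).const_mul c
  have h1 := (hasDerivAt_id x).const_mul d
  have h := (((h4.add h3).add h2).add h1).add_const e
  refine h.congr_deriv ?_
  push_cast
  ring

lemma hasDerivAt_poly3 (a b c d x : ℝ) :
    HasDerivAt (fun x => a*x^3 + b*x^2 + c*x + d)
      (3*a*x^2 + 2*b*x + c) x := by
  have h3 := (hasDerivAt_pow 3 x).const_mul a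
  have h2 := (hasDerivAt_pow 2 x).const_mul b
  have h1 := (hasDerivAt_id x).const_mul c
  have h := ((h3.add h2).add h1).add_const d
  refine h.congr_deriv ?_
  push_cast
  ring

theorem stmt_2 (n p : ℤ) (hn : 3 ≤ n) (hp1 : (n : ℝ)/2 ≤ (p : ℝ)) (hp2 : p ≤ n - 1)
    (f : ℝ → ℝ)
    (hf : f = fun x => (n : ℝ)*(n+1)*(2*n-p+1)*x^4
      - 4*(n+1)*(n^2+2*n*p+n-p^2+p)*x^3
      + 2*(n^3+9*n^2*p+7*n^2+4*n*p^2+16*n*p+8*n-2*p^3+2*p^2+6*p+2)*x^2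
      - 8*(n+1)*(p+1)*(n+3*p+1)*x + 8*(p+1)^2*(n+p+1)) :
    ∀ x : ℝ, 0 < iteratedDeriv 2 f x := by
  set N : ℝ := (n : ℝ) with hN
  set P : ℝ := (p : ℝ) with hP
  have hN3 : (3 : ℝ) ≤ N := by rw [hN]; exact_mod_cast hn
  have hP2 : P ≤ N - 1 := by
    have : (p : ℝ) ≤ ((n : ℤ) - 1 : ℤ) := by exact_mod_cast hp2
    push_cast at this
    linarith
  set A : ℝ := N*(N+1)*(2*N-P+1) with hA
  set B : ℝ := (N+1)*(N^2+2*N*P+N-P^2+P) with hB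
  set C : ℝ := N^3+9*N^2*P+7*N^2+4*N*P^2+16*N*P+8*N-2*P^3+2*P^2+6*P+2 with hC
  -- first derivative
  have hf1 : ∀ y : ℝ, HasDerivAt f
      (4*A*y^3 + 3*(-(4*B))*y^2 + 2*(2*C)*y + (-(8*(N+1)*(P+1)*(N+3*P+1)))) y := by
    intro y
    have h := hasDerivAt_poly4 A (-(4*B)) (2*C) (-(8*(N+1)*(P+1)*(N+3*P+1)))
      (8*(P+1)^2*(N+P+1)) y
    have hfe : f = (fun x => A*x^4 + (-(4*B))*x^3 + (2*C)*x^2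
        + (-(8*(N+1)*(P+1)*(N+3*P+1)))*x + 8*(P+1)^2*(N+P+1)) := by
      rw [hf]; funext x; rw [hA, hB, hC]; ring
    rw [hfe]
    exact h
  have hd1 : deriv f = fun y =>
      4*A*y^3 + 3*(-(4*B))*y^2 + 2*(2*C)*y + (-(8*(N+1)*(P+1)*(N+3*P+1))) :=
    funext fun y => (hf1 y).deriv
  intro x
  have hf2 : HasDerivAt (deriv f) (3*(4*A)*x^2 + 2*(3*(-(4*B)))*x + 2*(2*C)) x := by
    rw [hd1]
    exact hasDerivAt_poly3 (4*A) (3*(-(4*B))) (2*(2*C)) (-(8*(N+1)*(P+1)*(N+3*P+1))) x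
  have h2 : iteratedDeriv 2 f x = 12*A*x^2 - 24*B*x + 4*C := by
    have h22 : iteratedDeriv 2 f = deriv (deriv f) := by
      simp [iteratedDeriv_succ, iteratedDeriv_zero]
    rw [h22, hf2.deriv]
    ring
  rw [h2]
  -- key: A*C - 3*B^2 > 0, via q = 2P - N ≥ 0, r = N - 1 - P ≥ 0
  set q : ℝ := 2*P - N with hq
  set r : ℝ := N - 1 - P with hr
  have hq0 : 0 ≤ q := by rw [hq]; linarith
  have hr0 : 0 ≤ r := by rw [hr]; linarith
  have hNqr : N = q + 2*r + 2 := by rw [hq, hr]; ring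
  have hPqr : P = q + r + 1 := by rw [hq, hr]; ring
  have hkey : A*C - 3*B^2 =
      564 + 2212*r + 3489*r^2 + 2794*r^3 + 1165*r^4 + 224*r^5 + 12*r^6
      + 944*q + 3012*q*r + 3690*q*r^2 + 2124*q*r^3 + 548*q*r^4 + 44*q*r^5
      + 600*q^2 + 1500*q^2*r + 1335*q^2*r^2 + 484*q^2*r^3 + 55*q^2*r^4
      + 188*q^3 + 344*q^3*r + 195*q^3*r^2 + 32*q^3*r^3
      + 30*q^4 + 35*q^4*r + 9*q^4*r^2
      + 2*q^5 + q^5*r := by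
    rw [hA, hB, hC, hNqr, hPqr]; ring
  have hApos : 0 < A := by
    rw [hA]
    have : 0 < 2*N - P + 1 := by linarith
    positivity
  have hDpos : 0 < A*C - 3*B^2 := by
    rw [hkey]
    have h1 : 0 ≤ 2212*r + 3489*r^2 + 2794*r^3 + 1165*r^4 + 224*r^5 + 12*r^6
      + 944*q + 3012*q*r + 3690*q*r^2 + 2124*q*r^3 + 548*q*r^4 + 44*q*r^5
      + 600*q^2 + 1500*q^2*r + 1335*q^2*r^2 + 484*q^2*r^3 + 55*q^2*r^4
      + 188*q^3 + 344*q^3*r + 195*q^3*r^2 + 32*q^3*r^3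
      + 30*q^4 + 35*q^4*r + 9*q^4*r^2
      + 2*q^5 + q^5*r := by positivity
    linarith
  nlinarith [sq_nonneg (6*A*x - 6*B), hApos, hDpos, mul_pos hApos hDpos]
end

section
/- For integers n ≥ 3 and real p with n/2 ≤ p ≤ n-1, the quantity h_{n,p} = n⁵ - 5n⁴p - 6n⁴ + 7n³p² - 4n³p - 14n³ - 4n²p³ + 20n²p² + 4n²p - 9n² + np⁴ - 14np³ + 13np² + 2np - 2n + 3p⁴ - 6p³ + 3p² is negative. -/
theorem stmt_3 (n : ℤ) (p : ℝ) (hn : 3 ≤ n) (hp1 : (n : ℝ)/2 ≤ p) (hp2 : p ≤ (n : ℝ) - 1) :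
    (n : ℝ)^5 - 5*n^4*p - 6*n^4 + 7*n^3*p^2 - 4*n^3*p - 14*n^3 - 4*n^2*p^3 + 20*n^2*p^2
      + 4*n^2*p - 9*n^2 + n*p^4 - 14*n*p^3 + 13*n*p^2 + 2*n*p - 2*n
      + 3*p^4 - 6*p^3 + 3*p^2 < 0 := by
  set u : ℝ := p - (n : ℝ)/2 with hu_def
  set v : ℝ := (n : ℝ) - 1 - p with hv_def
  have hu : (0:ℝ) ≤ u := by simp only [hu_def]; linarith
  have hv : (0:ℝ) ≤ v := by simp only [hv_def]; linarith
  have hnuv : (n : ℝ) = 2*u + 2*v + 2 := by simp only [hu_def, hv_def]; ring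
  have key : (n : ℝ)^5 - 5*n^4*p - 6*n^4 + 7*n^3*p^2 - 4*n^3*p - 14*n^3 - 4*n^2*p^3 + 20*n^2*p^2
      + 4*n^2*p - 9*n^2 + n*p^4 - 14*n*p^3 + 13*n*p^2 + 2*n*p - 2*n
      + 3*p^4 - 6*p^3 + 3*p^2
      = -188 - 612*v - 755*v^2 - 428*v^3 - 103*v^4 - 6*v^5 - 504*u - 1264*u*v - 1114*u*v^2
        - 388*u*v^3 - 38*u*v^4 - 464*u^2 - 848*u^2*v - 472*u^2*v^2 - 72*u^2*v^3 - 192*u^3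
        - 224*u^3*v - 56*u^3*v^2 - 32*u^4 - 16*u^4*v := by
    have hp : p = u + (u + v + 1) := by simp only [hu_def, hv_def]; linarith [hnuv]
    rw [hnuv, hp]; ring
  rw [key]
  nlinarith [mul_nonneg (pow_nonneg hu 0) (pow_nonneg hv 1), mul_nonneg (pow_nonneg hu 0) (pow_nonneg hv 2), mul_nonneg (pow_nonneg hu 0) (pow_nonneg hv 3), mul_nonneg (pow_nonneg hu 0) (pow_nonneg hv 4), mul_nonneg (pow_nonneg hu 0) (pow_nonneg hv 5), mul_nonneg (pow_nonneg hu 1) (pow_nonneg hv 0), mul_nonneg (pow_nonneg hu 1) (pow_nonneg hv 1), mul_nonneg (pow_nonneg hu 1) (pow_nonneg hv 2), mul_nonneg (pow_nonneg hu 1) (pow_nonneg hv 3), mul_nonneg (pow_nonneg hu 1) (pow_nonneg hv 4), mul_nonneg (pow_nonneg hu 2) (pow_nonneg hv 0), mul_nonneg (pow_nonneg hu 2) (pow_nonneg hv 1), mul_nonneg (pow_nonneg hu 2) (pow_nonneg hv 2), mul_nonneg (pow_nonneg hu 2) (pow_nonneg hv 3), mul_nonneg (pow_nonneg hu 3) (pow_nonneg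 hv 0), mul_nonneg (pow_nonneg hu 3) (pow_nonneg hv 1), mul_nonneg (pow_nonneg hu 3) (pow_nonneg hv 2), mul_nonneg (pow_nonneg hu 4) (pow_nonneg hv 0), mul_nonneg (pow_nonneg hu 4) (pow_nonneg hv 1)]
end

section
/- Let Q_{n,p}(x) = n²(3n+4)x⁴ - 8n(2n²+np+5n-p²+3)x³ + 2(13n³+8n²p+36n²-8np²+16np+40n-16p²+16)x² - 8n(2n²+np+5n-p²+3)x + n²(3n+4). For integers n ≥ 3 and 1 ≤ p ≤ n-1, one has Q_{n,p}(0) > 0, Q_{n,p}(1) > 0, and Q_{n,p}(1/2) < 0. -/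
lemma key (n p : ℤ) (hn : 3 ≤ n) (hp1 : 1 ≤ p) (hp2 : p ≤ n - 1) :
    0 < 5*n^3+16*n^2*p+44*n^2-16*n*p^2-128*n*p-80*n+128*p^2-128 := by
  rcases le_or_gt 2 p with h | h
  · nlinarith [mul_nonneg (mul_nonneg (by linarith : (0:ℤ) ≤ p-2) (by linarith : (0:ℤ) ≤ p-2)) (by linarith : (0:ℤ) ≤ n-1-p), mul_nonneg (by linarith : (0:ℤ) ≤ p-2) (by linarith : (0:ℤ) ≤ n-1-p), mul_nonneg (mul_nonneg (by linarith : (0:ℤ) ≤ n-1-p) (by linarith : (0:ℤ) ≤ n-1-p)) (by linarith : (0:ℤ) ≤ n-1-p), mul_nonneg (mul_nonneg (by linarith : (0:ℤ) ≤ p-2) (by linarith : (0:ℤ) ≤ p-2)) (by linarith : (0:ℤ) ≤ p-2)]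
  · have hp : p = 1 := le_antisymm (by linarith) hp1
    subst hp
    nlinarith [mul_nonneg (mul_nonneg (by linarith : (0:ℤ) ≤ n-3) (by linarith : (0:ℤ) ≤ n-3)) (by linarith : (0:ℤ) ≤ n-3)]

theorem stmt_9 (n p : ℤ) (hn : 3 ≤ n) (hp1 : 1 ≤ p) (hp2 : p ≤ n - 1) (Q : ℝ → ℝ)
    (hQ : Q = fun x => (n : ℝ)^2*(3*n+4)*x^4 - 8*n*(2*n^2+n*p+5*n-p^2+3)*x^3
      + 2*(13*n^3+8*n^2*p+36*n^2-8*n*p^2+16*n*p+40*n-16*p^2+16)*x^2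
      - 8*n*(2*n^2+n*p+5*n-p^2+3)*x + n^2*(3*n+4)) :
    Q 0 > 0 ∧ Q 1 > 0 ∧ Q (1/2) < 0 := by
  have hn' : (3:ℝ) ≤ n := by exact_mod_cast hn
  have hp1' : (1:ℝ) ≤ p := by exact_mod_cast hp1
  have hp2' : (p:ℝ) ≤ (n:ℝ) - 1 := by exact_mod_cast hp2
  have hE : (0:ℝ) < 5*(n:ℝ)^3+16*n^2*p+44*n^2-16*n*p^2-128*n*p-80*n+128*p^2-128 := by
    exact_mod_cast key n p hn hp1 hp2
  subst hQ
  refine ⟨by norm_num; nlinarith, by norm_num; nlinarith [mul_pos (by linarith : (0:ℝ) < (p:ℝ)+1) (by linarith : (0:ℝ) < (n:ℝ)-p+1)], ?_⟩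
  show _ < (0:ℝ)
  norm_num
  nlinarith [hE]
end

section
/- Let Q_{n,p}(x) = n²(3n+4)x⁴ - 8n(2n²+np+5n-p²+3)x³ + 2(13n³+8n²p+36n²-8np²+16np+40n-16p²+16)x² - 8n(2n²+np+5n-p²+3)x + n²(3n+4). For integers n ≥ 3 and 1 ≤ p ≤ n-1, the equation Q_{n,p}(x) = 0 has four distinct positive real solutions: two in the open interval (0,1) and their reciprocals in (1,∞). -/
theorem stmt_10 (n p : ℤ) (hn : 3 ≤ n) (hp1 : 1 ≤ p) (hp2 : p ≤ n - 1) (Q : ℝ → ℝ)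
    (hQ : Q = fun x => (n : ℝ)^2*(3*n+4)*x^4 - 8*n*(2*n^2+n*p+5*n-p^2+3)*x^3
      + 2*(13*n^3+8*n^2*p+36*n^2-8*n*p^2+16*n*p+40*n-16*p^2+16)*x^2
      - 8*n*(2*n^2+n*p+5*n-p^2+3)*x + n^2*(3*n+4)) :
    ∃ a b : ℝ, 0 < a ∧ a < b ∧ b < 1 ∧
      Q a = 0 ∧ Q b = 0 ∧ Q (1/a) = 0 ∧ Q (1/b) = 0 := by
  have hn' : (3:ℝ) ≤ (n:ℝ) := by exact_mod_cast hn
  have hp1' : (1:ℝ) ≤ (p:ℝ) := by exact_mod_cast hp1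
  have hp2' : (p:ℝ) ≤ (n:ℝ) - 1 := by
    have : (p:ℝ) ≤ ((n-1 : ℤ) : ℝ) := by exact_mod_cast hp2
    simpa using this
  have hcont : Continuous Q := by
    subst hQ; continuity
  have hQ0 : 0 < Q 0 := by
    subst hQ; simp only
    nlinarith [sq_nonneg ((n:ℝ)), hn']
  have hQ1 : 0 < Q 1 := by
    subst hQ; simp only
    have key : (n:ℝ)^2*(3*n+4)*1^4 - 8*n*(2*n^2+n*p+5*n-p^2+3)*1^3
      + 2*(13*n^3+8*n^2*p+36*n^2-8*n*p^2+16*n*p+40*n-16*p^2+16)*1^2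
      - 8*n*(2*n^2+n*p+5*n-p^2+3)*1 + n^2*(3*n+4)
      = 32*(1+(p:ℝ))*((n:ℝ)+1-p) := by ring
    rw [key]
    have h1 : (0:ℝ) < 1+(p:ℝ) := by linarith
    have h2 : (0:ℝ) < (n:ℝ)+1-p := by linarith
    positivity
  have hQh : Q (1/2) < 0 := by
    subst hQ; simp only
    have key : (n:ℝ)^2*(3*n+4)*(1/2)^4 - 8*n*(2*n^2+n*p+5*n-p^2+3)*(1/2)^3
      + 2*(13*n^3+8*n^2*p+36*n^2-8*n*p^2+16*n*p+40*n-16*p^2+16)*(1/2)^2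
      - 8*n*(2*n^2+n*p+5*n-p^2+3)*(1/2) + n^2*(3*n+4)
      = (128 - 128*(p:ℝ)^2 + 80*n + 128*n*p + 16*n*p^2 - 44*n^2 - 16*n^2*p - 5*n^3)/16 := by
      ring
    rw [key]
    have hZ : (0:ℝ) ≤ ((p:ℝ)-1)*((p:ℝ)-2) := by
      have : (0:ℤ) ≤ (p-1)*(p-2) := by
        rcases eq_or_lt_of_le hp1 with h|h
        · simp [← h]
        · have : 2 ≤ p := h
          nlinarith
      have h' : (0:ℝ) ≤ (((p-1)*(p-2) : ℤ) : ℝ) := by exact_mod_cast this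
      push_cast at h'
      linarith
    have ha : (0:ℝ) ≤ (n:ℝ)-3 := by linarith
    have hb : (0:ℝ) ≤ (p:ℝ)-1 := by linarith
    have hc : (0:ℝ) ≤ (n:ℝ)-1-p := by linarith
    nlinarith [mul_nonneg (mul_nonneg ha hb) hc, mul_nonneg ha hc, hZ,
      mul_nonneg ha (mul_nonneg ha ha), mul_nonneg ha ha]
  -- root a in (0, 1/2)
  obtain ⟨a, ha, hQa⟩ : ∃ a ∈ Set.Ioo (0:ℝ) (1/2), Q a = 0 := by
    have h := intermediate_value_Ioo' (by norm_num : (0:ℝ) ≤ 1/2) hcont.continuousOn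
    have : (0:ℝ) ∈ Set.Ioo (Q (1/2)) (Q 0) := ⟨hQh, hQ0⟩
    obtain ⟨a, ha, hae⟩ := h this
    exact ⟨a, ha, hae⟩
  obtain ⟨b, hb, hQb⟩ : ∃ b ∈ Set.Ioo (1/2 : ℝ) 1, Q b = 0 := by
    have h := intermediate_value_Ioo (by norm_num : (1/2:ℝ) ≤ 1) hcont.continuousOn
    have : (0:ℝ) ∈ Set.Ioo (Q (1/2)) (Q 1) := ⟨hQh, hQ1⟩
    obtain ⟨b, hb, hbe⟩ := h this
    exact ⟨b, hb, hbe⟩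
  have ha0 : 0 < a := ha.1
  have hb0 : (0:ℝ) < b := lt_trans (by norm_num) hb.1
  have hrecip : ∀ x : ℝ, 0 < x → Q x = 0 → Q (1/x) = 0 := by
    intro x hx hqx
    have hx' : x ≠ 0 := ne_of_gt hx
    have key : Q (1/x) * x^4 = Q x := by
      subst hQ; simp only; field_simp; ring
    have hx4 : x^4 ≠ 0 := pow_ne_zero _ hx'
    have : Q (1/x) * x^4 = 0 := by rw [key, hqx]
    exact (mul_eq_zero.1 this).resolve_right hx4
  exact ⟨a, b, ha0, lt_trans ha.2 hb.1, hb.2, hQa, hQb, hrecip a ha0 hQa, hrecip b hb0 hQb⟩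
end

section
/- Let S_{n,p}(x) = n²(n+1)(3n+4)(2n-p+1)x⁴ + 4n(n+1)(2n-p+1)(n²-4np-2p²-8p-2)x³ + 2(n⁵-19n⁴p-11n⁴+36n³p²-18n³p-30n³+22n²p³+130n²p²+54n²p-22n²-16np⁴+4np³+108np²+68np-4n-16p⁴-16p³+16p²+16p)x² - 8(p+1)(n-2p)(n+p+1)(n²-6np-2n+2p²-4p-2)x + 8(p+1)²(n-2p)²(n+p+1). For integers n ≥ 3 and 1 ≤ p ≤ n-1 with p ≠ n/2, S_{n,p}(0) > 0 and S_{n,p}(2(p+1)/n) < 0. -/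
theorem stmt_13 (n p : ℤ) (hn : 3 ≤ n) (hp1 : 1 ≤ p) (hp2 : p ≤ n - 1) (hnp : 2*p ≠ n)
    (S : ℝ → ℝ)
    (hS : S = fun x => (n : ℝ)^2*(n+1)*(3*n+4)*(2*n-p+1)*x^4
      + 4*n*(n+1)*(2*n-p+1)*(n^2-4*n*p-2*p^2-8*p-2)*x^3
      + 2*(n^5-19*n^4*p-11*n^4+36*n^3*p^2-18*n^3*p-30*n^3+22*n^2*p^3+130*n^2*p^2
          +54*n^2*p-22*n^2-16*n*p^4+4*n*p^3+108*n*p^2+68*n*p-4*n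
          -16*p^4-16*p^3+16*p^2+16*p)*x^2
      - 8*(p+1)*(n-2*p)*(n+p+1)*(n^2-6*n*p-2*n+2*p^2-4*p-2)*x
      + 8*(p+1)^2*(n-2*p)^2*(n+p+1)) :
    S 0 > 0 ∧ S (2*((p : ℝ)+1)/n) < 0 := by
  subst hS
  have hnR : (3:ℝ) ≤ (n:ℝ) := by exact_mod_cast hn
  have hpR : (1:ℝ) ≤ (p:ℝ) := by exact_mod_cast hp1
  have hpnR : (p:ℝ) ≤ (n:ℝ) - 1 := by exact_mod_cast hp2
  have hn0 : (n:ℝ) ≠ 0 := by linarith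
  have hne : (n:ℝ) - 2*(p:ℝ) ≠ 0 := by
    intro h
    apply hnp
    have : (2*p : ℝ) = (n : ℝ) := by linarith
    exact_mod_cast this
  constructor
  · have h1 : (0:ℝ) < ((p:ℝ)+1)^2 := by positivity
    have h2 : (0:ℝ) < ((n:ℝ)-2*p)^2 := by positivity
    have h3 : (0:ℝ) < (n:ℝ)+p+1 := by linarith
    have := mul_pos (mul_pos (mul_pos (by norm_num : (0:ℝ) < 8) h1) h2) h3
    simp only []
    nlinarith [this]
  · have key : ((n : ℝ)^2*(n+1)*(3*n+4)*(2*n-p+1)*(2*((p : ℝ)+1)/n)^4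
      + 4*n*(n+1)*(2*n-p+1)*(n^2-4*n*p-2*p^2-8*p-2)*(2*((p : ℝ)+1)/n)^3
      + 2*(n^5-19*n^4*p-11*n^4+36*n^3*p^2-18*n^3*p-30*n^3+22*n^2*p^3+130*n^2*p^2
          +54*n^2*p-22*n^2-16*n*p^4+4*n*p^3+108*n*p^2+68*n*p-4*n
          -16*p^4-16*p^3+16*p^2+16*p)*(2*((p : ℝ)+1)/n)^2
      - 8*(p+1)*(n-2*p)*(n+p+1)*(n^2-6*n*p-2*n+2*p^2-4*p-2)*(2*((p : ℝ)+1)/n)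
      + 8*(p+1)^2*(n-2*p)^2*(n+p+1))
      = -(16*((p:ℝ)+1)^2*((n:ℝ)-p+1)^2*((n:ℝ)*(p-1)+4*p^2+4*p))/(n:ℝ)^2 := by
      field_simp
      ring
    simp only []
    rw [key]
    apply div_neg_of_neg_of_pos
    · have h1 : (0:ℝ) < ((p:ℝ)+1)^2 := by positivity
      have h2 : (0:ℝ) < ((n:ℝ)-p+1)^2 := pow_pos (by linarith) 2
      have h3 : (0:ℝ) < (n:ℝ)*((p:ℝ)-1)+4*(p:ℝ)^2+4*(p:ℝ) := by
        have h4 : (0:ℝ) ≤ (n:ℝ)*((p:ℝ)-1) := mul_nonneg (by linarith) (by linarith)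
        nlinarith [sq_nonneg ((p:ℝ))]
      exact neg_lt_zero.mpr (mul_pos (mul_pos (mul_pos (by norm_num : (0:ℝ)<16) h1) h2) h3)
    · positivity
end

section
/- Let S_{n,p}(x) be the quartic n²(n+1)(3n+4)(2n-p+1)x⁴ + 4n(n+1)(2n-p+1)(n²-4np-2p²-8p-2)x³ + 2(n⁵-19n⁴p-11n⁴+36n³p²-18n³p-30n³+22n²p³+130n²p²+54n²p-22n²-16np⁴+4np³+108np²+68np-4n-16p⁴-16p³+16p²+16p)x² - 8(p+1)(n-2p)(n+p+1)(n²-6np-2n+2p²-4p-2)x + 8(p+1)²(n-2p)²(n+p+1). For integers n ≥ 3 and 1 ≤ p < n/2, the equation S_{n,p}(x) = 0 has exactly two distinct positive real roots and two distinct negative real roots. -/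
open Polynomial in
private lemma quartic_roots (A B C2 D E : ℝ) (hA : A ≠ 0) (a b c d x : ℝ)
    (h1 : a < b) (h2 : b < c) (h3 : c < d)
    (ha : A*a^4+B*a^3+C2*a^2+D*a+E = 0) (hb : A*b^4+B*b^3+C2*b^2+D*b+E = 0)
    (hc : A*c^4+B*c^3+C2*c^2+D*c+E = 0) (hd : A*d^4+B*d^3+C2*d^2+D*d+E = 0)
    (hx : A*x^4+B*x^3+C2*x^2+D*x+E = 0) : x = a ∨ x = b ∨ x = c ∨ x = d := by
  classical
  set P : ℝ[X] := C A * X^4 + C B * X^3 + C C2 * X^2 + C D * X + C E with hPdef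
  have hev : ∀ t : ℝ, P.eval t = A*t^4+B*t^3+C2*t^2+D*t+E := by
    intro t; simp [hPdef]
  have hP0 : P ≠ 0 := by
    intro h
    apply hA
    have h4 : P.coeff 4 = 0 := by rw [h]; simp
    rw [hPdef] at h4
    simpa [coeff_add, coeff_C_mul, coeff_X_pow, coeff_C] using h4
  have hdeg : P.natDegree ≤ 4 := by rw [hPdef]; compute_degree
  have hmem : ∀ t : ℝ, A*t^4+B*t^3+C2*t^2+D*t+E = 0 → t ∈ P.roots.toFinset := by
    intro t ht
    rw [Multiset.mem_toFinset, Polynomial.mem_roots hP0]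
    simpa [Polynomial.IsRoot, hev] using ht
  have hcard : P.roots.toFinset.card ≤ 4 :=
    le_trans (Multiset.toFinset_card_le _) (le_trans (Polynomial.card_roots' P) hdeg)
  have hab : a ≠ b := h1.ne
  have hac : a ≠ c := (h1.trans h2).ne
  have had : a ≠ d := (h1.trans (h2.trans h3)).ne
  have hbc : b ≠ c := h2.ne
  have hbd : b ≠ d := (h2.trans h3).ne
  have hcd : c ≠ d := h3.ne
  have hsub : ({a,b,c,d} : Finset ℝ) ⊆ P.roots.toFinset := by
    intro y hy
    simp only [Finset.mem_insert, Finset.mem_singleton] at hy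
    rcases hy with rfl|rfl|rfl|rfl
    exacts [hmem _ ha, hmem _ hb, hmem _ hc, hmem _ hd]
  have hc4 : ({a,b,c,d} : Finset ℝ).card = 4 := by
    rw [Finset.card_insert_of_notMem (by simp [hab, hac, had]),
        Finset.card_insert_of_notMem (by simp [hbc, hbd]),
        Finset.card_insert_of_notMem (by simp [hcd]), Finset.card_singleton]
  have heq := Finset.eq_of_subset_of_card_le hsub (by omega)
  have hx' := hmem x hx
  rw [← heq] at hx'
  simpa using hx'

set_option maxHeartbeats 1000000 in
theorem stmt_16 (n p : ℤ) (hn : 3 ≤ n) (hp1 : 1 ≤ p) (hp2 : 2*p < n) (S : ℝ → ℝ)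
    (hS : S = fun x => (n : ℝ)^2*(n+1)*(3*n+4)*(2*n-p+1)*x^4
      + 4*n*(n+1)*(2*n-p+1)*(n^2-4*n*p-2*p^2-8*p-2)*x^3
      + 2*(n^5-19*n^4*p-11*n^4+36*n^3*p^2-18*n^3*p-30*n^3+22*n^2*p^3+130*n^2*p^2
          +54*n^2*p-22*n^2-16*n*p^4+4*n*p^3+108*n*p^2+68*n*p-4*n
          -16*p^4-16*p^3+16*p^2+16*p)*x^2
      - 8*(p+1)*(n-2*p)*(n+p+1)*(n^2-6*n*p-2*n+2*p^2-4*p-2)*x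
      + 8*(p+1)^2*(n-2*p)^2*(n+p+1)) :
    ∃ a b c d : ℝ, a < b ∧ b < 0 ∧ 0 < c ∧ c < d ∧
      S a = 0 ∧ S b = 0 ∧ S c = 0 ∧ S d = 0 ∧
      ∀ x : ℝ, S x = 0 → x = a ∨ x = b ∨ x = c ∨ x = d := by
  have hq' : (0:ℤ) ≤ n - 2*p - 1 := by omega
  have hr' : (0:ℤ) ≤ p - 1 := by omega
  set Q : ℕ := (n - 2*p - 1).toNat with hQdef
  set R : ℕ := (p - 1).toNat with hRdef
  have hQZ : (Q:ℤ) = n - 2*p - 1 := Int.toNat_of_nonneg hq'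
  have hRZ : (R:ℤ) = p - 1 := Int.toNat_of_nonneg hr'
  have hPr : (p:ℝ) = (R:ℝ) + 1 := by
    have h0 : ((R:ℤ):ℝ) = ((p - 1 : ℤ):ℝ) := by exact_mod_cast congrArg (fun z : ℤ => (z:ℝ)) hRZ
    push_cast at h0; linarith
  have hNr : (n:ℝ) = 2*(R:ℝ) + (Q:ℝ) + 3 := by
    have h1 : ((Q:ℤ):ℝ) = ((n - 2*p - 1 : ℤ):ℝ) := by
      exact_mod_cast congrArg (fun z : ℤ => (z:ℝ)) hQZ
    push_cast at h1
    linarith [hPr]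
  have hn0 : (0:ℝ) < (n:ℝ) := by
    have h3 : (3:ℝ) ≤ (n:ℝ) := by exact_mod_cast hn
    linarith
  have hd0 : (2*(R:ℝ) + (Q:ℝ) + 3) ≠ 0 := by positivity
  have hp0 : (1:ℝ) ≤ (p:ℝ) := by exact_mod_cast hp1
  have hpn : 2*(p:ℝ) < (n:ℝ) := by exact_mod_cast hp2
  -- signs at the five test points t0 = (4p-2n)/n, t1 = (2p-n)/n, 0, t3 = (2p+2)/n, 2
  have hS0 : 0 < S ((4*(p:ℝ) - 2*(n:ℝ))/(n:ℝ)) := by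
    have e : S ((4*(p:ℝ) - 2*(n:ℝ))/(n:ℝ))
        = ((Q:ℝ)+1)^2 * (40*(Q:ℝ)^4 + 168*(Q:ℝ)^3*(R:ℝ) + 432*(Q:ℝ)^3 + 264*(Q:ℝ)^2*(R:ℝ)^2 + 1352*(Q:ℝ)^2*(R:ℝ) + 1728*(Q:ℝ)^2 + 184*(Q:ℝ)*(R:ℝ)^3 + 1408*(Q:ℝ)*(R:ℝ)^2 + 3576*(Q:ℝ)*(R:ℝ) + 3024*(Q:ℝ) + 48*(R:ℝ)^4 + 488*(R:ℝ)^3 + 1848*(R:ℝ)^2 + 3096*(R:ℝ) + 1944) / (2*(R:ℝ) + (Q:ℝ) + 3) := by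
      simp only [hS]
      rw [hNr, hPr]
      field_simp
      ring
    rw [e]; positivity
  have hS1 : S ((2*(p:ℝ) - (n:ℝ))/(n:ℝ)) < 0 := by
    have e : S ((2*(p:ℝ) - (n:ℝ))/(n:ℝ))
        = -(((Q:ℝ)+1)^2 * (5*(Q:ℝ)^4*(R:ℝ) + 14*(Q:ℝ)^4 + 36*(Q:ℝ)^3*(R:ℝ)^2 + 167*(Q:ℝ)^3*(R:ℝ) + 200*(Q:ℝ)^3 + 96*(Q:ℝ)^2*(R:ℝ)^3 + 634*(Q:ℝ)^2*(R:ℝ)^2 + 1413*(Q:ℝ)^2*(R:ℝ) + 1068*(Q:ℝ)^2 + 112*(Q:ℝ)*(R:ℝ)^4 + 960*(Q:ℝ)*(R:ℝ)^3 + 3112*(Q:ℝ)*(R:ℝ)^2 + 4521*(Q:ℝ)*(R:ℝ) + 2488*(Q:ℝ) + 48*(R:ℝ)^5 + 512*(R:ℝ)^4 + 2176*(R:ℝ)^3 + 4626*(R:ℝ)^2 + 4934*(R:ℝ) + 2118)) / (2*(R:ℝ) + (Q:ℝ) + 3)^2 := by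
      simp only [hS]
      rw [hNr, hPr]
      field_simp
      ring
    rw [e]
    apply div_neg_of_neg_of_pos
    · have h : (0:ℝ) < ((Q:ℝ)+1)^2 * (5*(Q:ℝ)^4*(R:ℝ) + 14*(Q:ℝ)^4 + 36*(Q:ℝ)^3*(R:ℝ)^2 + 167*(Q:ℝ)^3*(R:ℝ) + 200*(Q:ℝ)^3 + 96*(Q:ℝ)^2*(R:ℝ)^3 + 634*(Q:ℝ)^2*(R:ℝ)^2 + 1413*(Q:ℝ)^2*(R:ℝ) + 1068*(Q:ℝ)^2 + 112*(Q:ℝ)*(R:ℝ)^4 + 960*(Q:ℝ)*(R:ℝ)^3 + 3112*(Q:ℝ)*(R:ℝ)^2 + 4521*(Q:ℝ)*(R:ℝ) + 2488*(Q:ℝ) + 48*(R:ℝ)^5 + 512*(R:ℝ)^4 + 2176*(R:ℝ)^3 + 4626*(R:ℝ)^2 + 4934*(R:ℝ) + 2118) := by positivity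
      linarith
    · positivity
  have hSz : 0 < S 0 := by
    have e : S 0 = 8*((R:ℝ)+2)^2*((Q:ℝ)+1)^2*(3*(R:ℝ)+(Q:ℝ)+5) := by
      simp only [hS]
      rw [hNr, hPr]
      ring
    rw [e]; positivity
  have hS3 : S ((2*(p:ℝ) + 2)/(n:ℝ)) < 0 := by
    have e : S ((2*(p:ℝ) + 2)/(n:ℝ))
        = -(((R:ℝ)+2)^2 * (16*(Q:ℝ)^3*(R:ℝ) + 128*(Q:ℝ)^2*(R:ℝ)^2 + 336*(Q:ℝ)^2*(R:ℝ) + 128*(Q:ℝ)^2 + 208*(Q:ℝ)*(R:ℝ)^3 + 1152*(Q:ℝ)*(R:ℝ)^2 + 1840*(Q:ℝ)*(R:ℝ) + 768*(Q:ℝ) + 96*(R:ℝ)^4 + 816*(R:ℝ)^3 + 2432*(R:ℝ)^2 + 2928*(R:ℝ) + 1152)) / (2*(R:ℝ) + (Q:ℝ) + 3)^2 := by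
      simp only [hS]
      rw [hNr, hPr]
      field_simp
      ring
    rw [e]
    apply div_neg_of_neg_of_pos
    · have h : (0:ℝ) < ((R:ℝ)+2)^2 * (16*(Q:ℝ)^3*(R:ℝ) + 128*(Q:ℝ)^2*(R:ℝ)^2 + 336*(Q:ℝ)^2*(R:ℝ) + 128*(Q:ℝ)^2 + 208*(Q:ℝ)*(R:ℝ)^3 + 1152*(Q:ℝ)*(R:ℝ)^2 + 1840*(Q:ℝ)*(R:ℝ) + 768*(Q:ℝ) + 96*(R:ℝ)^4 + 816*(R:ℝ)^3 + 2432*(R:ℝ)^2 + 2928*(R:ℝ) + 1152) := by positivity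
      linarith
    · positivity
  have hS2 : 0 < S 2 := by
    have e : S 2 = 168*(Q:ℝ)^5 + 1176*(Q:ℝ)^4*(R:ℝ) + 2280*(Q:ℝ)^4 + 3096*(Q:ℝ)^3*(R:ℝ)^2 + 11968*(Q:ℝ)^3*(R:ℝ) + 11536*(Q:ℝ)^3 + 3912*(Q:ℝ)^2*(R:ℝ)^3 + 22376*(Q:ℝ)^2*(R:ℝ)^2 + 42608*(Q:ℝ)^2*(R:ℝ) + 26960*(Q:ℝ)^2 + 2400*(Q:ℝ)*(R:ℝ)^4 + 17968*(Q:ℝ)*(R:ℝ)^3 + 50248*(Q:ℝ)*(R:ℝ)^2 + 62144*(Q:ℝ)*(R:ℝ) + 28616*(Q:ℝ) + 576*(R:ℝ)^5 + 5280*(R:ℝ)^4 + 19176*(R:ℝ)^3 + 34424*(R:ℝ)^2 + 30456*(R:ℝ) + 10568 := by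
      simp only [hS]
      rw [hNr, hPr]
      ring
    rw [e]; positivity
  -- ordering of test points
  have ht1 : (2*(p:ℝ) - (n:ℝ))/(n:ℝ) < 0 :=
    div_neg_of_neg_of_pos (by linarith) hn0
  have ht0 : (4*(p:ℝ) - 2*(n:ℝ))/(n:ℝ) < (2*(p:ℝ) - (n:ℝ))/(n:ℝ) := by
    have h : (4*(p:ℝ) - 2*(n:ℝ))/(n:ℝ) = 2*((2*(p:ℝ) - (n:ℝ))/(n:ℝ)) := by ring
    rw [h]; linarith
  have ht3 : (0:ℝ) < (2*(p:ℝ) + 2)/(n:ℝ) := div_pos (by linarith) hn0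
  have ht4 : (2*(p:ℝ) + 2)/(n:ℝ) < 2 := by
    rw [div_lt_iff₀ hn0]
    have h3 : (3:ℝ) ≤ (n:ℝ) := by exact_mod_cast hn
    linarith
  have hcont : Continuous S := by rw [hS]; fun_prop
  -- four roots via IVT
  obtain ⟨a, haI, haS⟩ := intermediate_value_Ioo' ht0.le hcont.continuousOn ⟨hS1, hS0⟩
  obtain ⟨b, hbI, hbS⟩ := intermediate_value_Ioo ht1.le hcont.continuousOn ⟨hS1, hSz⟩
  obtain ⟨c, hcI, hcS⟩ := intermediate_value_Ioo' ht3.le hcont.continuousOn ⟨hS3, hSz⟩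
  obtain ⟨d, hdI, hdS⟩ := intermediate_value_Ioo ht4.le hcont.continuousOn ⟨hS3, hS2⟩
  have hab : a < b := lt_trans haI.2 hbI.1
  have hb0 : b < 0 := hbI.2
  have h0c : 0 < c := hcI.1
  have hcd : c < d := lt_trans hcI.2 hdI.1
  refine ⟨a, b, c, d, hab, hb0, h0c, hcd, haS, hbS, hcS, hdS, ?_⟩
  intro x hx
  have hApos : (0:ℝ) < (n:ℝ)^2*((n:ℝ)+1)*(3*(n:ℝ)+4)*(2*(n:ℝ)-(p:ℝ)+1) := by
    apply mul_pos
    apply mul_pos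
    apply mul_pos
    · positivity
    · linarith
    · linarith
    · linarith
  have hbc : b < c := lt_trans hb0 h0c
  have conv : ∀ t : ℝ, S t = 0 →
      ((n:ℝ)^2*((n:ℝ)+1)*(3*(n:ℝ)+4)*(2*(n:ℝ)-(p:ℝ)+1))*t^4
      + (4*(n:ℝ)*((n:ℝ)+1)*(2*(n:ℝ)-(p:ℝ)+1)*((n:ℝ)^2-4*(n:ℝ)*(p:ℝ)-2*(p:ℝ)^2-8*(p:ℝ)-2))*t^3
      + (2*((n:ℝ)^5-19*(n:ℝ)^4*(p:ℝ)-11*(n:ℝ)^4+36*(n:ℝ)^3*(p:ℝ)^2-18*(n:ℝ)^3*(p:ℝ)-30*(n:ℝ)^3+22*(n:ℝ)^2*(p:ℝ)^3+130*(n:ℝ)^2*(p:ℝ)^2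
          +54*(n:ℝ)^2*(p:ℝ)-22*(n:ℝ)^2-16*(n:ℝ)*(p:ℝ)^4+4*(n:ℝ)*(p:ℝ)^3+108*(n:ℝ)*(p:ℝ)^2+68*(n:ℝ)*(p:ℝ)-4*(n:ℝ)
          -16*(p:ℝ)^4-16*(p:ℝ)^3+16*(p:ℝ)^2+16*(p:ℝ)))*t^2
      + (-(8*((p:ℝ)+1)*((n:ℝ)-2*(p:ℝ))*((n:ℝ)+(p:ℝ)+1)*((n:ℝ)^2-6*(n:ℝ)*(p:ℝ)-2*(n:ℝ)+2*(p:ℝ)^2-4*(p:ℝ)-2)))*t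
      + (8*((p:ℝ)+1)^2*((n:ℝ)-2*(p:ℝ))^2*((n:ℝ)+(p:ℝ)+1)) = 0 := by
    intro t ht
    simp only [hS] at ht
    linear_combination ht
  exact quartic_roots _ _ _ _ _ hApos.ne' a b c d x hab hbc hcd
    (conv a haS) (conv b hbS) (conv c hcS) (conv d hdS) (conv x hx)
end

section
/- Let S_{n,p}(x) be the quartic n²(n+1)(3n+4)(2n-p+1)x⁴ + 4n(n+1)(2n-p+1)(n²-4np-2p²-8p-2)x³ + 2(n⁵-19n⁴p-11n⁴+36n³p²-18n³p-30n³+22n²p³+130n²p²+54n²p-22n²-16np⁴+4np³+108np²+68np-4n-16p⁴-16p³+16p²+16p)x² - 8(p+1)(n-2p)(n+p+1)(n²-6np-2n+2p²-4p-2)x + 8(p+1)²(n-2p)²(n+p+1). For integers n ≥ 3 and n/2 < p ≤ n-1, the equation S_{n,p}(x) = 0 has four distinct positive real roots. -/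
set_option maxHeartbeats 2000000 in
private lemma quartic_pos_aux (c4 c3 c2 c1 c0 X : ℝ) (h4 : 0 < c4) (hX : 1 ≤ X)
    (hB : 1 + |c3| + |c2| + |c1| + |c0| ≤ c4 * X) :
    0 < c4*X^4 + c3*X^3 + c2*X^2 + c1*X + c0 := by
  have hX0 : (0:ℝ) < X := by linarith
  have e2 : X^2 ≤ X^3 := by nlinarith [mul_nonneg (sq_nonneg X) (show (0:ℝ) ≤ X-1 by linarith)]
  have e1 : X ≤ X^3 := le_trans (by nlinarith [mul_nonneg hX0.le (show (0:ℝ) ≤ X-1 by linarith)] : X ≤ X^2) e2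
  have e3 : (1:ℝ) ≤ X^3 := le_trans (by nlinarith [mul_nonneg (show (0:ℝ) ≤ X-1 by linarith) (show (0:ℝ) ≤ X+1 by linarith)] : (1:ℝ) ≤ X^2) e2
  have h3 := mul_le_mul_of_nonneg_right (neg_abs_le c3) (pow_nonneg hX0.le 3)
  have h2 := mul_le_mul_of_nonneg_right (neg_abs_le c2) (pow_nonneg hX0.le 2)
  have h1 := mul_le_mul_of_nonneg_right (neg_abs_le c1) hX0.le
  have h0 := neg_abs_le c0
  have g2 := mul_le_mul_of_nonneg_left e2 (abs_nonneg c2)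
  have g1 := mul_le_mul_of_nonneg_left e1 (abs_nonneg c1)
  have g0 := mul_le_mul_of_nonneg_left e3 (abs_nonneg c0)
  have gB := mul_le_mul_of_nonneg_right hB (pow_nonneg hX0.le 3)
  nlinarith [gB, h3, h2, h1, h0, g2, g1, g0, e3]

set_option maxHeartbeats 4000000 in
set_option maxRecDepth 8000 in
theorem stmt_17 (n p : ℤ) (hn : 3 ≤ n) (hp1 : n < 2*p) (hp2 : p ≤ n - 1) (S : ℝ → ℝ)
    (hS : S = fun x => (n : ℝ)^2*(n+1)*(3*n+4)*(2*n-p+1)*x^4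
      + 4*n*(n+1)*(2*n-p+1)*(n^2-4*n*p-2*p^2-8*p-2)*x^3
      + 2*(n^5-19*n^4*p-11*n^4+36*n^3*p^2-18*n^3*p-30*n^3+22*n^2*p^3+130*n^2*p^2
          +54*n^2*p-22*n^2-16*n*p^4+4*n*p^3+108*n*p^2+68*n*p-4*n
          -16*p^4-16*p^3+16*p^2+16*p)*x^2
      - 8*(p+1)*(n-2*p)*(n+p+1)*(n^2-6*n*p-2*n+2*p^2-4*p-2)*x
      + 8*(p+1)^2*(n-2*p)^2*(n+p+1)) :
    ∃ a b c d : ℝ, 0 < a ∧ a < b ∧ b < c ∧ c < d ∧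
      S a = 0 ∧ S b = 0 ∧ S c = 0 ∧ S d = 0 := by
  have hN : (3:ℝ) ≤ (n:ℝ) := by exact_mod_cast hn
  have hP1 : (n:ℝ) + 1 ≤ 2*(p:ℝ) := by exact_mod_cast hp1
  have hP2 : (p:ℝ) ≤ (n:ℝ) - 1 := by exact_mod_cast hp2
  set N := (n:ℝ) with hNdef
  set P := (p:ℝ) with hPdef
  have hN0 : (0:ℝ) < N := by linarith
  have hNne : N ≠ 0 := ne_of_gt hN0
  obtain ⟨a, b, ha, hb, hna, hpb⟩ : ∃ a b : ℝ, 0 ≤ a ∧ 0 ≤ b ∧ N = a+2*b+3 ∧ P = a+b+2 :=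
    ⟨2*P-N-1, N-1-P, by linarith, by linarith, by ring, by ring⟩
  have hcont : Continuous S := by rw [hS]; continuity
  -- the four test points
  set t1 : ℝ := (2*P-N)/N with ht1def
  set t2 : ℝ := 2*(2*P-N)/N with ht2def
  set t3 : ℝ := 2*(P+1)/N with ht3def
  have ht1 : 0 < t1 := div_pos (by linarith) hN0
  have ht12 : t1 < t2 := by
    rw [ht1def, ht2def, div_lt_div_iff₀ hN0 hN0]; nlinarith
  have ht23 : t2 < t3 := by
    rw [ht2def, ht3def, div_lt_div_iff₀ hN0 hN0]; nlinarith
  -- sign at 0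
  have hS0 : 0 < S 0 := by
    have h : S 0 = 8*(P+1)^2*(2*P-N)^2*(N+P+1) := by rw [hS]; ring
    rw [h]
    have := mul_pos (mul_pos (mul_pos (by norm_num : (0:ℝ)<8)
      (pow_pos (show (0:ℝ) < P+1 by linarith) 2))
      (pow_pos (show (0:ℝ) < 2*P-N by linarith) 2))
      (show (0:ℝ) < N+P+1 by linarith)
    linarith
  -- sign at t1
  have hQpos : ∀ y Q : ℝ, 0 < Q → N^4 * S y = -Q → S y < 0 := by
    intro y Q hQ hEq
    nlinarith [pow_pos hN0 4]
  have hSt1 : S t1 < 0 := by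
    apply hQpos _ (1*a^9 + 17*a^8*b + 38*a^8 + 116*a^7*b^2 + 497*a^7*b + 530*a^7 + 420*a^6*b^3 + 2682*a^6*b^2 + 5665*a^6*b + 3950*a^6 + 880*a^5*b^4 + 7636*a^5*b^3 + 24504*a^5*b^2 + 34469*a^5*b + 17924*a^5 + 1072*a^4*b^5 + 12152*a^4*b^4 + 53840*a^4*b^3 + 116822*a^4*b^2 + 124303*a^4*b + 51922*a^4 + 704*a^3*b^6 + 10432*a^3*b^5 + 61760*a^3*b^4 + 188488*a^3*b^3 + 314324*a^3*b^2 + 272419*a^3*b + 96062*a^3 + 192*a^2*b^7 + 4096*a^2*b^6 + 33504*a^2*b^5 + 141712*a^2*b^4 + 341284*a^2*b^3 + 473094*a^2*b^2 + 351867*a^2*b + 108794*a^2 + 384*a*b^7 + 6080*a*b^6 + 40000*a*b^5 + 142352*a*b^4 + 296804*a*b^3 + 363264*a*b^2 + 241991*a*b + 67755*a + 192*b^7 + 2688*b^6 + 15856*b^5 + 51128*b^4 + 97384*b^3 + 109610*b^2 + 67524*b + 17568)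
    · linarith [mul_nonneg (pow_nonneg ha 0) (pow_nonneg hb 1), mul_nonneg (pow_nonneg ha 0) (pow_nonneg hb 2), mul_nonneg (pow_nonneg ha 0) (pow_nonneg hb 3), mul_nonneg (pow_nonneg ha 0) (pow_nonneg hb 4), mul_nonneg (pow_nonneg ha 0) (pow_nonneg hb 5), mul_nonneg (pow_nonneg ha 0) (pow_nonneg hb 6), mul_nonneg (pow_nonneg ha 0) (pow_nonneg hb 7), mul_nonneg (pow_nonneg ha 0) (pow_nonneg hb 8), mul_nonneg (pow_nonneg ha 1) (pow_nonneg hb 0), mul_nonneg (pow_nonneg ha 1) (pow_nonneg hb 1), mul_nonneg (pow_nonneg ha 1) (pow_nonneg hb 2), mul_nonneg (pow_nonneg ha 1) (pow_nonneg hb 3), mul_nonneg (pow_nonneg ha 1) (pow_nonneg hb 4), mul_nonneg (pow_nonneg ha 1) (pow_nonneg hb 5), mul_nonneg (pow_nonneg ha 1) (pow_nonneg hb 6), mul_nonneg (pow_nonneg ha 1) (pow_nonneg hb 7), mul_nonneg (pow_nonneg ha 2) (pow_nonneg hb 0), mul_nonneg (pow_nonneg ha 2) (pow_nonneg hb 1),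 mul_nonneg (pow_nonneg ha 2) (pow_nonneg hb 2), mul_nonneg (pow_nonneg ha 2) (pow_nonneg hb 3), mul_nonneg (pow_nonneg ha 2) (pow_nonneg hb 4), mul_nonneg (pow_nonneg ha 2) (pow_nonneg hb 5), mul_nonneg (pow_nonneg ha 2) (pow_nonneg hb 6), mul_nonneg (pow_nonneg ha 2) (pow_nonneg hb 7), mul_nonneg (pow_nonneg ha 3) (pow_nonneg hb 0), mul_nonneg (pow_nonneg ha 3) (pow_nonneg hb 1), mul_nonneg (pow_nonneg ha 3) (pow_nonneg hb 2), mul_nonneg (pow_nonneg ha 3) (pow_nonneg hb 3), mul_nonneg (pow_nonneg ha 3) (pow_nonneg hb 4), mul_nonneg (pow_nonneg ha 3) (pow_nonneg hb 5), mul_nonneg (pow_nonneg ha 3) (pow_nonneg hb 6), mul_nonneg (pow_nonneg ha 4) (pow_nonneg hb 0), mul_nonneg (pow_nonneg ha 4) (pow_nonneg hb 1), mul_nonneg (pow_nonneg ha 4) (pow_nonneg hb 2), mul_nonneg (pow_nonneg ha 4) (pow_nonneg hb 3), mul_nonneg (pow_nonneg ha 4) (pow_nonneg hb 4), mul_nonneg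 (pow_nonneg ha 4) (pow_nonneg hb 5), mul_nonneg (pow_nonneg ha 5) (pow_nonneg hb 0), mul_nonneg (pow_nonneg ha 5) (pow_nonneg hb 1), mul_nonneg (pow_nonneg ha 5) (pow_nonneg hb 2), mul_nonneg (pow_nonneg ha 5) (pow_nonneg hb 3), mul_nonneg (pow_nonneg ha 5) (pow_nonneg hb 4), mul_nonneg (pow_nonneg ha 6) (pow_nonneg hb 0), mul_nonneg (pow_nonneg ha 6) (pow_nonneg hb 1), mul_nonneg (pow_nonneg ha 6) (pow_nonneg hb 2), mul_nonneg (pow_nonneg ha 6) (pow_nonneg hb 3), mul_nonneg (pow_nonneg ha 7) (pow_nonneg hb 0), mul_nonneg (pow_nonneg ha 7) (pow_nonneg hb 1), mul_nonneg (pow_nonneg ha 7) (pow_nonneg hb 2), mul_nonneg (pow_nonneg ha 8) (pow_nonneg hb 0), mul_nonneg (pow_nonneg ha 8) (pow_nonneg hb 1), mul_nonneg (pow_nonneg ha 9) (pow_nonneg hb 0)]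
    · rw [hS, ht1def, hna, hpb]
      have h0 : a+2*b+3 ≠ 0 := by positivity
      field_simp
      ring
  have hSt2 : 0 < S t2 := by
    have hEq : N^4 * S t2 = (8*a^6*b^3 + 32*a^6*b^2 + 32*a^6*b + 96*a^5*b^4 + 592*a^5*b^3 + 1280*a^5*b^2 + 1088*a^5*b + 256*a^5 + 384*a^4*b^5 + 3168*a^4*b^4 + 10136*a^4*b^3 + 15520*a^4*b^2 + 11104*a^4*b + 2816*a^4 + 640*a^3*b^6 + 6784*a^3*b^5 + 29248*a^3*b^4 + 65376*a^3*b^3 + 79360*a^3*b^2 + 49024*a^3*b + 11776*a^3 + 384*a^2*b^7 + 5504*a^2*b^6 + 32128*a^2*b^5 + 99904*a^2*b^4 + 179384*a^2*b^3 + 185952*a^2*b^2 + 102624*a^2*b + 23040*a^2 + 768*a*b^7 + 9088*a*b^6 + 45440*a*b^5 + 124256*a*b^4 + 200272*a*b^3 + 189696*a*b^2 + 97344*a*b + 20736*a + 384*b^7 + 4224*b^6 + 19712*b^5 + 50528*b^4 + 76712*b^3 + 68832*b^2 + 33696*b + 6912) := by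
      rw [hS, ht2def, hna, hpb]
      have h0 : a+2*b+3 ≠ 0 := by positivity
      field_simp
      ring
    have hQ : (0:ℝ) < (8*a^6*b^3 + 32*a^6*b^2 + 32*a^6*b + 96*a^5*b^4 + 592*a^5*b^3 + 1280*a^5*b^2 + 1088*a^5*b + 256*a^5 + 384*a^4*b^5 + 3168*a^4*b^4 + 10136*a^4*b^3 + 15520*a^4*b^2 + 11104*a^4*b + 2816*a^4 + 640*a^3*b^6 + 6784*a^3*b^5 + 29248*a^3*b^4 + 65376*a^3*b^3 + 79360*a^3*b^2 + 49024*a^3*b + 11776*a^3 + 384*a^2*b^7 + 5504*a^2*b^6 + 32128*a^2*b^5 + 99904*a^2*b^4 + 179384*a^2*b^3 + 185952*a^2*b^2 + 102624*a^2*b + 23040*a^2 + 768*a*b^7 + 9088*a*b^6 + 45440*a*b^5 + 124256*a*b^4 + 200272*a*b^3 + 189696*a*b^2 + 97344*a*b + 20736*a + 384*b^7 + 4224*b^6 + 19712*b^5 + 50528*b^4 + 76712*b^3 + 68832*b^2 + 33696*b + 6912) := by linarith [mul_nonneg (pow_nonneg ha 0) (pow_nonneg hb 1), mul_nonneg (pow_nonneg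 ha 0) (pow_nonneg hb 2), mul_nonneg (pow_nonneg ha 0) (pow_nonneg hb 3), mul_nonneg (pow_nonneg ha 0) (pow_nonneg hb 4), mul_nonneg (pow_nonneg ha 0) (pow_nonneg hb 5), mul_nonneg (pow_nonneg ha 0) (pow_nonneg hb 6), mul_nonneg (pow_nonneg ha 0) (pow_nonneg hb 7), mul_nonneg (pow_nonneg ha 0) (pow_nonneg hb 8), mul_nonneg (pow_nonneg ha 1) (pow_nonneg hb 0), mul_nonneg (pow_nonneg ha 1) (pow_nonneg hb 1), mul_nonneg (pow_nonneg ha 1) (pow_nonneg hb 2), mul_nonneg (pow_nonneg ha 1) (pow_nonneg hb 3), mul_nonneg (pow_nonneg ha 1) (pow_nonneg hb 4), mul_nonneg (pow_nonneg ha 1) (pow_nonneg hb 5), mul_nonneg (pow_nonneg ha 1) (pow_nonneg hb 6), mul_nonneg (pow_nonneg ha 1) (pow_nonneg hb 7), mul_nonneg (pow_nonneg ha 2) (pow_nonneg hb 0), mul_nonneg (pow_nonneg ha 2) (pow_nonneg hb 1), mul_nonneg (pow_nonneg ha 2) (pow_nonneg hb 2), mul_nonneg (pow_nonneg ha 2)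 (pow_nonneg hb 3), mul_nonneg (pow_nonneg ha 2) (pow_nonneg hb 4), mul_nonneg (pow_nonneg ha 2) (pow_nonneg hb 5), mul_nonneg (pow_nonneg ha 2) (pow_nonneg hb 6), mul_nonneg (pow_nonneg ha 2) (pow_nonneg hb 7), mul_nonneg (pow_nonneg ha 3) (pow_nonneg hb 0), mul_nonneg (pow_nonneg ha 3) (pow_nonneg hb 1), mul_nonneg (pow_nonneg ha 3) (pow_nonneg hb 2), mul_nonneg (pow_nonneg ha 3) (pow_nonneg hb 3), mul_nonneg (pow_nonneg ha 3) (pow_nonneg hb 4), mul_nonneg (pow_nonneg ha 3) (pow_nonneg hb 5), mul_nonneg (pow_nonneg ha 3) (pow_nonneg hb 6), mul_nonneg (pow_nonneg ha 4) (pow_nonneg hb 0), mul_nonneg (pow_nonneg ha 4) (pow_nonneg hb 1), mul_nonneg (pow_nonneg ha 4) (pow_nonneg hb 2), mul_nonneg (pow_nonneg ha 4) (pow_nonneg hb 3), mul_nonneg (pow_nonneg ha 4) (pow_nonneg hb 4), mul_nonneg (pow_nonneg ha 4) (pow_nonneg hb 5), mul_nonneg (pow_nonneg ha 5) (pow_nonneg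 hb 0), mul_nonneg (pow_nonneg ha 5) (pow_nonneg hb 1), mul_nonneg (pow_nonneg ha 5) (pow_nonneg hb 2), mul_nonneg (pow_nonneg ha 5) (pow_nonneg hb 3), mul_nonneg (pow_nonneg ha 5) (pow_nonneg hb 4), mul_nonneg (pow_nonneg ha 6) (pow_nonneg hb 0), mul_nonneg (pow_nonneg ha 6) (pow_nonneg hb 1), mul_nonneg (pow_nonneg ha 6) (pow_nonneg hb 2), mul_nonneg (pow_nonneg ha 6) (pow_nonneg hb 3), mul_nonneg (pow_nonneg ha 7) (pow_nonneg hb 0), mul_nonneg (pow_nonneg ha 7) (pow_nonneg hb 1), mul_nonneg (pow_nonneg ha 7) (pow_nonneg hb 2), mul_nonneg (pow_nonneg ha 8) (pow_nonneg hb 0), mul_nonneg (pow_nonneg ha 8) (pow_nonneg hb 1), mul_nonneg (pow_nonneg ha 9) (pow_nonneg hb 0)]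
    nlinarith [pow_pos hN0 4]
  have hSt3 : S t3 < 0 := by
    apply hQpos _ (80*a^6*b^2 + 320*a^6*b + 320*a^6 + 656*a^5*b^3 + 3968*a^5*b^2 + 8000*a^5*b + 5376*a^5 + 2192*a^4*b^4 + 17904*a^4*b^3 + 54672*a^4*b^2 + 73984*a^4*b + 37440*a^4 + 3824*a^3*b^5 + 39584*a^3*b^4 + 163040*a^3*b^3 + 334080*a^3*b^2 + 340608*a^3*b + 138240*a^3 + 3680*a^2*b^6 + 46320*a^2*b^5 + 241344*a^2*b^4 + 666400*a^2*b^3 + 1028592*a^2*b^2 + 841536*a^2*b + 285120*a^2 + 1856*a*b^7 + 27584*a*b^6 + 174416*a*b^5 + 608352*a*b^4 + 1264272*a*b^3 + 1565568*a*b^2 + 1069632*a*b + 311040*a + 384*b^8 + 6592*b^7 + 49120*b^6 + 207568*b^5 + 544176*b^4 + 906480*b^3 + 937008*b^2 + 549504*b + 139968)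
    · linarith [mul_nonneg (pow_nonneg ha 0) (pow_nonneg hb 1), mul_nonneg (pow_nonneg ha 0) (pow_nonneg hb 2), mul_nonneg (pow_nonneg ha 0) (pow_nonneg hb 3), mul_nonneg (pow_nonneg ha 0) (pow_nonneg hb 4), mul_nonneg (pow_nonneg ha 0) (pow_nonneg hb 5), mul_nonneg (pow_nonneg ha 0) (pow_nonneg hb 6), mul_nonneg (pow_nonneg ha 0) (pow_nonneg hb 7), mul_nonneg (pow_nonneg ha 0) (pow_nonneg hb 8), mul_nonneg (pow_nonneg ha 1) (pow_nonneg hb 0), mul_nonneg (pow_nonneg ha 1) (pow_nonneg hb 1), mul_nonneg (pow_nonneg ha 1) (pow_nonneg hb 2), mul_nonneg (pow_nonneg ha 1) (pow_nonneg hb 3), mul_nonneg (pow_nonneg ha 1) (pow_nonneg hb 4), mul_nonneg (pow_nonneg ha 1) (pow_nonneg hb 5), mul_nonneg (pow_nonneg ha 1) (pow_nonneg hb 6), mul_nonneg (pow_nonneg ha 1) (pow_nonneg hb 7), mul_nonneg (pow_nonneg ha 2) (pow_nonneg hb 0), mul_nonneg (pow_nonneg ha 2) (pow_nonneg hb 1),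 mul_nonneg (pow_nonneg ha 2) (pow_nonneg hb 2), mul_nonneg (pow_nonneg ha 2) (pow_nonneg hb 3), mul_nonneg (pow_nonneg ha 2) (pow_nonneg hb 4), mul_nonneg (pow_nonneg ha 2) (pow_nonneg hb 5), mul_nonneg (pow_nonneg ha 2) (pow_nonneg hb 6), mul_nonneg (pow_nonneg ha 2) (pow_nonneg hb 7), mul_nonneg (pow_nonneg ha 3) (pow_nonneg hb 0), mul_nonneg (pow_nonneg ha 3) (pow_nonneg hb 1), mul_nonneg (pow_nonneg ha 3) (pow_nonneg hb 2), mul_nonneg (pow_nonneg ha 3) (pow_nonneg hb 3), mul_nonneg (pow_nonneg ha 3) (pow_nonneg hb 4), mul_nonneg (pow_nonneg ha 3) (pow_nonneg hb 5), mul_nonneg (pow_nonneg ha 3) (pow_nonneg hb 6), mul_nonneg (pow_nonneg ha 4) (pow_nonneg hb 0), mul_nonneg (pow_nonneg ha 4) (pow_nonneg hb 1), mul_nonneg (pow_nonneg ha 4) (pow_nonneg hb 2), mul_nonneg (pow_nonneg ha 4) (pow_nonneg hb 3), mul_nonneg (pow_nonneg ha 4) (pow_nonneg hb 4), mul_nonneg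 (pow_nonneg ha 4) (pow_nonneg hb 5), mul_nonneg (pow_nonneg ha 5) (pow_nonneg hb 0), mul_nonneg (pow_nonneg ha 5) (pow_nonneg hb 1), mul_nonneg (pow_nonneg ha 5) (pow_nonneg hb 2), mul_nonneg (pow_nonneg ha 5) (pow_nonneg hb 3), mul_nonneg (pow_nonneg ha 5) (pow_nonneg hb 4), mul_nonneg (pow_nonneg ha 6) (pow_nonneg hb 0), mul_nonneg (pow_nonneg ha 6) (pow_nonneg hb 1), mul_nonneg (pow_nonneg ha 6) (pow_nonneg hb 2), mul_nonneg (pow_nonneg ha 6) (pow_nonneg hb 3), mul_nonneg (pow_nonneg ha 7) (pow_nonneg hb 0), mul_nonneg (pow_nonneg ha 7) (pow_nonneg hb 1), mul_nonneg (pow_nonneg ha 7) (pow_nonneg hb 2), mul_nonneg (pow_nonneg ha 8) (pow_nonneg hb 0), mul_nonneg (pow_nonneg ha 8) (pow_nonneg hb 1), mul_nonneg (pow_nonneg ha 9) (pow_nonneg hb 0)]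
    · rw [hS, ht3def, hna, hpb]
      have h0 : a+2*b+3 ≠ 0 := by positivity
      field_simp
      ring
  -- point at infinity
  set c4 : ℝ := N^2*(N+1)*(3*N+4)*(2*N-P+1) with hc4
  set c3 : ℝ := 4*N*(N+1)*(2*N-P+1)*(N^2-4*N*P-2*P^2-8*P-2) with hc3
  set c2 : ℝ := 2*(N^5-19*N^4*P-11*N^4+36*N^3*P^2-18*N^3*P-30*N^3+22*N^2*P^3+130*N^2*P^2
          +54*N^2*P-22*N^2-16*N*P^4+4*N*P^3+108*N*P^2+68*N*P-4*N
          -16*P^4-16*P^3+16*P^2+16*P) with hc2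
  set c1 : ℝ := -(8*(P+1)*(N-2*P)*(N+P+1)*(N^2-6*N*P-2*N+2*P^2-4*P-2)) with hc1
  set c0 : ℝ := 8*(P+1)^2*(N-2*P)^2*(N+P+1) with hc0
  have hc4pos : 0 < c4 := by
    rw [hc4]
    have := mul_pos (mul_pos (mul_pos (pow_pos hN0 2)
      (show (0:ℝ) < N+1 by linarith)) (show (0:ℝ) < 3*N+4 by linarith))
      (show (0:ℝ) < 2*N-P+1 by linarith)
    linarith
  set X : ℝ := max (t3+1) ((1 + |c3| + |c2| + |c1| + |c0|)/c4) with hXdef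
  have ht3X : t3 < X := lt_of_lt_of_le (by linarith) (le_max_left _ _)
  have hX1 : 1 ≤ X := by
    have : 0 < t3 := by linarith
    have := le_max_left (t3+1) ((1 + |c3| + |c2| + |c1| + |c0|)/c4)
    linarith
  have hB : 1 + |c3| + |c2| + |c1| + |c0| ≤ c4 * X := by
    have h := le_max_right (t3+1) ((1 + |c3| + |c2| + |c1| + |c0|)/c4)
    rw [div_le_iff₀ hc4pos] at h
    rw [hXdef]
    linarith [mul_comm c4 (max (t3+1) ((1 + |c3| + |c2| + |c1| + |c0|)/c4))]
  have hSX : 0 < S X := by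
    have h : S X = c4*X^4 + c3*X^3 + c2*X^2 + c1*X + c0 := by
      rw [hS, hc4, hc3, hc2, hc1, hc0]; ring
    rw [h]
    exact quartic_pos_aux c4 c3 c2 c1 c0 X hc4pos hX1 hB
  -- IVT on the four intervals
  obtain ⟨r1, hr1, hfr1⟩ := intermediate_value_Ioo' (le_of_lt ht1) hcont.continuousOn
    (Set.mem_Ioo.mpr ⟨hSt1, hS0⟩)
  obtain ⟨r2, hr2, hfr2⟩ := intermediate_value_Ioo (le_of_lt ht12) hcont.continuousOn
    (Set.mem_Ioo.mpr ⟨hSt1, hSt2⟩)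
  obtain ⟨r3, hr3, hfr3⟩ := intermediate_value_Ioo' (le_of_lt ht23) hcont.continuousOn
    (Set.mem_Ioo.mpr ⟨hSt3, hSt2⟩)
  obtain ⟨r4, hr4, hfr4⟩ := intermediate_value_Ioo (le_of_lt ht3X) hcont.continuousOn
    (Set.mem_Ioo.mpr ⟨hSt3, hSX⟩)
  exact ⟨r1, r2, r3, r4, hr1.1, lt_trans hr1.2 hr2.1, lt_trans hr2.2 hr3.1,
    lt_trans hr3.2 hr4.1, hfr1, hfr2, hfr3, hfr4⟩
end
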